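/- Let P ⊆ ℝ² be finite, p_i ∈ P, l ∈ {0,…,5}, and p_j ∈ V_l(p_i) with ⟨p_j − p_i, b_l⟩ = min_{r ∈ V_l(p_i)} ⟨r − p_i, b_l⟩. Then the set T = {p_i} ∪ {x ∈ closure(W_l(p_i)) : ⟨x − p_i, b_l⟩ ≤ ⟨p_j − p_i, b_l⟩} is an l-tri — namely T = p_i + λ∆_l with λ = (2/√3)·⟨p_j − p_i, b_l⟩ — which is empty with respect to P, has p_i as one of its vertices, and has p_j on its boundary (on the side opposite p_i). -/

import Mathlib

/- Common geometric setup: the Euclidean plane, wedges `W_l`, bisectors `b_l`,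
equilateral triangles `∆_l` and `l`-tri's, circular sectors `σ_l` and `l`-pies,
and the proximity graphs (Semi-Yao, nearest-neighbor, Equilateral/Pie Delaunay,
Yao) together with Euclidean minimum spanning trees. -/

open Real EuclideanGeometry
open scoped RealInnerProductSpace

noncomputable section

abbrev E : Type := EuclideanSpace ℝ (Fin 2)

/-- The point `(a, b)` in the Euclidean plane. -/
def pt (a b : ℝ) : E := (WithLp.equiv 2 (Fin 2 → ℝ)).symm ![a, b]

/-- The unit vector at polar angle `θ`. -/
def dir (θ : ℝ) : E := pt (Real.cos θ) (Real.sin θ)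

/-- The lower boundary angle `(2l-1)π/6` of the `l`-th wedge. -/
def lo (l : Fin 6) : ℝ := (2 * ((l : ℕ) : ℝ) - 1) * π / 6

/-- The upper boundary angle `(2l+1)π/6` of the `l`-th wedge. -/
def hi (l : Fin 6) : ℝ := (2 * ((l : ℕ) : ℝ) + 1) * π / 6

/-- The half-open wedge `W_l`: all nonzero points whose polar angle (mod `2π`)
lies in `[(2l-1)π/6, (2l+1)π/6)`. -/
def wedge (l : Fin 6) : Set E :=
  {x | x ≠ 0 ∧ ∃ θ : ℝ, lo l ≤ θ ∧ θ < hi l ∧ x = ‖x‖ • dir θ}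

/-- `W_l(p)`, the translate of `W_l` with apex `p`. -/
def wedgeAt (l : Fin 6) (p : E) : Set E := {x | x - p ∈ wedge l}

/-- The unit bisector vector `b_l = (cos(lπ/3), sin(lπ/3))` of `W_l`. -/
def bvec (l : Fin 6) : E := dir (((l : ℕ) : ℝ) * π / 3)

/-- `V_l(p) = P ∩ W_l(p)`. -/
def Vl (P : Finset E) (l : Fin 6) (p : E) : Set E := {x | x ∈ P ∧ x ∈ wedgeAt l p}

/-- The closed equilateral triangle `∆_l` with vertices `0`, `dir ((2l-1)π/6)`,
`dir ((2l+1)π/6)`. -/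
def tri (l : Fin 6) : Set E := convexHull ℝ {0, dir (lo l), dir (hi l)}

/-- The vertex set of `∆_l`. -/
def triVerts (l : Fin 6) : Set E := {0, dir (lo l), dir (hi l)}

/-- The `l`-tri `c + lam • ∆_l`. -/
def lTri (l : Fin 6) (c : E) (lam : ℝ) : Set E := (fun x => c + lam • x) '' tri l

/-- The closed circular sector (piece of pie) `σ_l` of the unit disk. -/
def sector (l : Fin 6) : Set E :=
  {x | ‖x‖ ≤ 1 ∧ (x = 0 ∨ ∃ θ : ℝ, lo l ≤ θ ∧ θ ≤ hi l ∧ x = ‖x‖ • dir θ)}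

/-- The `l`-pie `c + lam • σ_l`. -/
def lPie (l : Fin 6) (c : E) (lam : ℝ) : Set E := (fun x => c + lam • x) '' sector l

/-- Directed Semi-Yao graph edge from `a` to `b`: `a ∈ V_l(b)` for some `l` and `a`
has the minimum `b_l`-coordinate among the points of `V_l(b)`. -/
def SYG (P : Finset E) (a b : E) : Prop :=
  b ∈ P ∧ ∃ l : Fin 6, a ∈ Vl P l b ∧
    ∀ r ∈ Vl P l b, ⟪a - b, bvec l⟫ ≤ ⟪r - b, bvec l⟫

/-- Undirected Semi-Yao graph edge. -/
def SYGu (P : Finset E) (p q : E) : Prop := SYG P p q ∨ SYG P q p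

/-- Directed nearest-neighbor graph edge from `a` to `b`: `b ∈ P \ {a}` and
`‖a - b‖ = min_{r ∈ P \ {a}} ‖a - r‖`. -/
def NNG (P : Finset E) (a b : E) : Prop :=
  a ∈ P ∧ b ∈ P ∧ b ≠ a ∧ ∀ r ∈ P, r ≠ a → ‖a - b‖ ≤ ‖a - r‖

/-- Edge of the Equilateral Delaunay triangulation `EDT_l(P)`: there is an `l`-tri,
empty with respect to `P`, with both endpoints on its boundary. -/
def EDT (P : Finset E) (l : Fin 6) (p q : E) : Prop :=
  p ∈ P ∧ q ∈ P ∧ p ≠ q ∧ ∃ c : E, ∃ lam : ℝ, 0 < lam ∧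
    p ∈ frontier (lTri l c lam) ∧ q ∈ frontier (lTri l c lam) ∧
    ∀ r ∈ P, r ∉ interior (lTri l c lam)

/-- Edge of the Equilateral Delaunay graph `EDG(P) = EDT_0(P) ∪ EDT_1(P)`. -/
def EDG (P : Finset E) (p q : E) : Prop := EDT P 0 p q ∨ EDT P 1 p q

/-- Directed Yao-graph edge from `p` to `q`: `q ∈ V_l(p)` for some `l` and
`‖p - q‖ = min_{r ∈ V_l(p)} ‖p - r‖`. -/
def YG (P : Finset E) (p q : E) : Prop :=
  p ∈ P ∧ ∃ l : Fin 6, q ∈ Vl P l p ∧ ∀ r ∈ Vl P l p, ‖p - q‖ ≤ ‖p - r‖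

/-- Edge of the Pie Delaunay triangulation `PDT_l(P)`: there is an `l`-pie, empty
with respect to `P`, with both endpoints on its boundary. -/
def PDT (P : Finset E) (l : Fin 6) (p q : E) : Prop :=
  p ∈ P ∧ q ∈ P ∧ p ≠ q ∧ ∃ c : E, ∃ lam : ℝ, 0 < lam ∧
    p ∈ frontier (lPie l c lam) ∧ q ∈ frontier (lPie l c lam) ∧
    ∀ r ∈ P, r ∉ interior (lPie l c lam)

/-- Edge of the Pie Delaunay graph `PDG(P) = PDT_0(P) ∪ ⋯ ∪ PDT_5(P)`. -/
def PDG (P : Finset E) (p q : E) : Prop := ∃ l : Fin 6, PDT P l p q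

/-- Total Euclidean edge weight of a graph on the points of `P`. -/
def edgeWeight (P : Finset E) (G : SimpleGraph {x // x ∈ P}) : ℝ :=
  ∑ e ∈ G.edgeSet.toFinite.toFinset,
    Sym2.lift ⟨fun (a b : {x // x ∈ P}) => ‖(a : E) - (b : E)‖,
      fun _ _ => norm_sub_rev _ _⟩ e

/-- `T` is a Euclidean minimum spanning tree of `P`: a spanning tree (connected and
acyclic graph on the vertex set `P`) of minimum total Euclidean edge weight. -/
def IsEMST (P : Finset E) (T : SimpleGraph {x // x ∈ P}) : Prop :=
  T.IsTree ∧ ∀ G : SimpleGraph {x // x ∈ P}, G.IsTree → edgeWeight P T ≤ edgeWeight P G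


lemma pt_apply_zero (a b : ℝ) : pt a b 0 = a := by simp [pt]
lemma pt_apply_one (a b : ℝ) : pt a b 1 = b := by simp [pt]

lemma inner_pt (a b c d : ℝ) : ⟪pt a b, pt c d⟫ = a * c + b * d := by
  simp [pt, PiLp.inner_apply, Fin.sum_univ_two]; ring

lemma inner_dir (a c : ℝ) : ⟪dir a, dir c⟫ = Real.cos (a - c) := by
  rw [dir, dir, inner_pt, Real.cos_sub]

lemma norm_dir (a : ℝ) : ‖dir a‖ = 1 := by
  rw [← Real.sqrt_one, ← Real.sin_sq_add_cos_sq a]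
  rw [EuclideanSpace.norm_eq]
  simp [dir, pt, Fin.sum_univ_two]

lemma dir_sub_int_mul (θ : ℝ) (n : ℤ) : dir (θ - n * (2 * π)) = dir θ := by
  unfold dir
  rw [Real.cos_sub_int_mul_two_pi, Real.sin_sub_int_mul_two_pi]

lemma eq_pt (x : E) : x = pt (x 0) (x 1) := by
  ext i; fin_cases i <;> simp [pt]

lemma polar_exists (x : E) (hx : x ≠ 0) (a : ℝ) :
    ∃ θ, θ ∈ Set.Ico a (a + 2 * π) ∧ x = ‖x‖ • dir θ := by
  set z : ℂ := ⟨x 0, x 1⟩ with hz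
  have hz0 : z ≠ 0 := by
    intro h
    apply hx
    have h0 : x 0 = 0 := congrArg Complex.re h
    have h1 : x 1 = 0 := congrArg Complex.im h
    ext i; fin_cases i <;> simpa
  have habs : ‖z‖ = ‖x‖ := by
    rw [Complex.norm_def, Complex.normSq_apply, EuclideanSpace.norm_eq]
    simp [hz, Fin.sum_univ_two, sq]
  have hre : x 0 = ‖x‖ * Real.cos (Complex.arg z) := by
    rw [Complex.cos_arg hz0, habs]
    field_simp [habs ▸ (norm_ne_zero_iff.mpr hz0)]
    rfl
  have him : x 1 = ‖x‖ * Real.sin (Complex.arg z) := by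
    rw [Complex.sin_arg, habs]
    field_simp [habs ▸ (norm_ne_zero_iff.mpr hz0)]
    rfl
  refine ⟨toIcoMod Real.two_pi_pos a (Complex.arg z), toIcoMod_mem_Ico _ _ _, ?_⟩
  have : toIcoMod Real.two_pi_pos a (Complex.arg z)
      = Complex.arg z - toIcoDiv Real.two_pi_pos a (Complex.arg z) * (2 * π) := by
    rw [toIcoMod]; push_cast [zsmul_eq_mul]; ring
  rw [this, dir_sub_int_mul]
  ext i; fin_cases i
  · simpa [dir, pt] using hre
  · simpa [dir, pt] using him

-- normals
def nu (l : Fin 6) : E := dir (lo l + π / 2)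
def nv (l : Fin 6) : E := dir (hi l - π / 2)

lemma hi_sub_lo (l : Fin 6) : hi l - lo l = π / 3 := by unfold hi lo; ring

lemma inner_dir_nu (l : Fin 6) (θ : ℝ) : ⟪dir θ, nu l⟫ = Real.sin (θ - lo l) := by
  rw [nu, inner_dir]
  rw [show θ - (lo l + π / 2) = (θ - lo l) - π / 2 by ring, Real.cos_sub_pi_div_two]

lemma inner_dir_nv (l : Fin 6) (θ : ℝ) : ⟪dir θ, nv l⟫ = Real.sin (hi l - θ) := by
  rw [nv, inner_dir]
  rw [show θ - (hi l - π / 2) = π / 2 - (hi l - θ) by ring, Real.cos_pi_div_two_sub]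

lemma bvec_eq (l : Fin 6) : bvec l = nu l + nv l := by
  have h1 : lo l + π / 2 = ((l : ℕ) : ℝ) * π / 3 + π / 3 := by unfold lo; ring
  have h2 : hi l - π / 2 = ((l : ℕ) : ℝ) * π / 3 - π / 3 := by unfold hi; ring
  unfold bvec nu nv dir
  rw [h1, h2]
  ext i; fin_cases i <;>
    simp [pt, Real.cos_add, Real.cos_sub, Real.sin_add, Real.sin_sub,
      Real.cos_pi_div_three, Real.sin_pi_div_three] <;> ring

lemma mem_wedge_iff (l : Fin 6) (x : E) :
    x ∈ wedge l ↔ 0 ≤ ⟪x, nu l⟫ ∧ 0 < ⟪x, nv l⟫ := by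
  constructor
  · rintro ⟨hx0, θ, hθ1, hθ2, hxθ⟩
    have hn : 0 < ‖x‖ := norm_pos_iff.mpr hx0
    have h1 : ⟪x, nu l⟫ = ‖x‖ * Real.sin (θ - lo l) := by
      rw [hxθ]; rw [real_inner_smul_left, inner_dir_nu]
      simp [hxθ.symm]
    have h2 : ⟪x, nv l⟫ = ‖x‖ * Real.sin (hi l - θ) := by
      rw [hxθ]; rw [real_inner_smul_left, inner_dir_nv]
      simp [hxθ.symm]
    have hls := hi_sub_lo l
    have hπ := Real.pi_pos
    constructor
    · rw [h1]
      exact mul_nonneg hn.le (Real.sin_nonneg_of_nonneg_of_le_pi (by linarith) (by linarith))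
    · rw [h2]
      exact mul_pos hn (Real.sin_pos_of_pos_of_lt_pi (by linarith) (by linarith))
  · rintro ⟨h1, h2⟩
    have hx0 : x ≠ 0 := by
      rintro rfl; simp at h2
    obtain ⟨θ, hmem, hxθ⟩ := polar_exists x hx0 (lo l)
    have hn : 0 < ‖x‖ := norm_pos_iff.mpr hx0
    have h1' : 0 ≤ Real.sin (θ - lo l) := by
      have : ⟪x, nu l⟫ = ‖x‖ * Real.sin (θ - lo l) := by
        rw [hxθ, real_inner_smul_left, inner_dir_nu]; simp [hxθ.symm]
      nlinarith [this ▸ h1]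
    have h2' : 0 < Real.sin (hi l - θ) := by
      have : ⟪x, nv l⟫ = ‖x‖ * Real.sin (hi l - θ) := by
        rw [hxθ, real_inner_smul_left, inner_dir_nv]; simp [hxθ.symm]
      nlinarith [this ▸ h2]
    have hls := hi_sub_lo l
    have hπ := Real.pi_pos
    obtain ⟨hθa, hθb⟩ := hmem
    -- θ - lo l ∈ [0, 2π), sin ≥ 0 ⇒ θ - lo l ≤ π
    have hle : θ - lo l ≤ π := by
      by_contra hgt
      push_neg at hgt
      have : Real.sin (θ - lo l) = Real.sin (θ - lo l - 2 * π) := by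
        rw [Real.sin_sub_two_pi]
      have hneg : Real.sin (θ - lo l - 2 * π) < 0 := by
        apply Real.sin_neg_of_neg_of_neg_pi_lt <;> linarith
      linarith [this ▸ h1']
    have hlt : θ < hi l := by
      by_contra hge
      push_neg at hge
      have : Real.sin (hi l - θ) ≤ 0 :=
        Real.sin_nonpos_of_nonpos_of_neg_pi_le (by linarith) (by linarith)
      linarith
    exact ⟨hx0, θ, hθa, hlt, hxθ⟩

lemma sqrt3_pos : (0:ℝ) < Real.sqrt 3 := Real.sqrt_pos.mpr (by norm_num)
lemma sqrt3_mul_self : Real.sqrt 3 * Real.sqrt 3 = 3 := Real.mul_self_sqrt (by norm_num)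

lemma inner_u_nu (l : Fin 6) : ⟪dir (lo l), nu l⟫ = 0 := by
  rw [inner_dir_nu]; simp
lemma inner_v_nu (l : Fin 6) : ⟪dir (hi l), nu l⟫ = Real.sqrt 3 / 2 := by
  rw [inner_dir_nu, hi_sub_lo, Real.sin_pi_div_three]
lemma inner_u_nv (l : Fin 6) : ⟪dir (lo l), nv l⟫ = Real.sqrt 3 / 2 := by
  rw [inner_dir_nv, hi_sub_lo, Real.sin_pi_div_three]
lemma inner_v_nv (l : Fin 6) : ⟪dir (hi l), nv l⟫ = 0 := by
  rw [inner_dir_nv]; simp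
lemma inner_u_b (l : Fin 6) : ⟪dir (lo l), bvec l⟫ = Real.sqrt 3 / 2 := by
  rw [bvec_eq, inner_add_right, inner_u_nu, inner_u_nv]; ring
lemma inner_v_b (l : Fin 6) : ⟪dir (hi l), bvec l⟫ = Real.sqrt 3 / 2 := by
  rw [bvec_eq, inner_add_right, inner_v_nu, inner_v_nv]; ring
lemma inner_b (l : Fin 6) (x : E) : ⟪x, bvec l⟫ = ⟪x, nu l⟫ + ⟪x, nv l⟫ := by
  rw [bvec_eq, inner_add_right]

lemma decomp (l : Fin 6) (x : E) :
    x = ((2 / Real.sqrt 3) * ⟪x, nv l⟫) • dir (lo l)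
      + ((2 / Real.sqrt 3) * ⟪x, nu l⟫) • dir (hi l) := by
  have hnu : ⟪x, nu l⟫ = x 0 * (-Real.sin (lo l)) + x 1 * Real.cos (lo l) := by
    nth_rewrite 1 [eq_pt x]
    rw [nu, dir, inner_pt, Real.cos_add_pi_div_two, Real.sin_add_pi_div_two]
  have hnv : ⟪x, nv l⟫ = x 0 * Real.sin (hi l) + x 1 * (-Real.cos (hi l)) := by
    nth_rewrite 1 [eq_pt x]
    rw [nv, dir, inner_pt, Real.cos_sub_pi_div_two, Real.sin_sub_pi_div_two]
  have F : Real.sin (hi l) * Real.cos (lo l) - Real.cos (hi l) * Real.sin (lo l)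
      = Real.sqrt 3 / 2 := by
    rw [← Real.sin_sub, hi_sub_lo, Real.sin_pi_div_three]
  have G := sqrt3_mul_self
  have hne := sqrt3_pos.ne'
  ext i; fin_cases i
  · simp [dir, pt, hnu, hnv]
    field_simp
    linear_combination (-2) * x 0 * F
  · simp [dir, pt, hnu, hnv]
    field_simp
    linear_combination (-2) * x 1 * F

lemma closure_wedge (l : Fin 6) :
    closure (wedge l) = {x : E | 0 ≤ ⟪x, nu l⟫ ∧ 0 ≤ ⟪x, nv l⟫} := by
  apply Set.Subset.antisymm
  · apply closure_minimal
    · intro x hx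
      rw [mem_wedge_iff] at hx
      exact ⟨hx.1, hx.2.le⟩
    · have hc : ∀ c : E, Continuous fun x : E => ⟪x, c⟫ := fun c =>
        continuous_id.inner continuous_const
      exact (isClosed_le continuous_const (hc _)).inter
        (isClosed_le continuous_const (hc _))
  · rintro x ⟨h1, h2⟩
    have key : ∀ ε : ℝ, 0 < ε → x + ε • dir (lo l) ∈ wedge l := by
      intro ε hε
      rw [mem_wedge_iff]
      constructor
      · rw [inner_add_left, real_inner_smul_left, inner_u_nu]; linarith
      · rw [inner_add_left, real_inner_smul_left, inner_u_nv]
        nlinarith [sqrt3_pos]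
    have htend : Filter.Tendsto (fun n : ℕ => x + (1 / ((n:ℝ) + 1)) • dir (lo l))
        Filter.atTop (nhds x) := by
      have h0 : Filter.Tendsto (fun n : ℕ => (1 / ((n:ℝ) + 1))) Filter.atTop (nhds 0) :=
        tendsto_one_div_add_atTop_nhds_zero_nat
      have := (h0.smul_const (dir (lo l))).const_add x
      simpa using this
    exact mem_closure_of_tendsto htend (Filter.Eventually.of_forall fun n =>
      key _ (by positivity))

lemma smul_mem_tri (l : Fin 6) {s t : ℝ} (hs : 0 ≤ s) (ht : 0 ≤ t) (hst : s + t ≤ 1) :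
    s • dir (lo l) + t • dir (hi l) ∈ tri l := by
  by_cases h : s + t = 0
  · have hs0 : s = 0 := by linarith
    have ht0 : t = 0 := by linarith
    simp [hs0, ht0, tri]
    exact subset_convexHull ℝ _ (Set.mem_insert _ _)
  · have hc : 0 < s + t := lt_of_le_of_ne (by linarith) (Ne.symm h)
    set z := (s / (s + t)) • dir (lo l) + (t / (s + t)) • dir (hi l) with hz
    have hzmem : z ∈ tri l := by
      apply segment_subset_convexHull (by simp : dir (lo l) ∈ _) (by simp : dir (hi l) ∈ _)
      exact ⟨s / (s + t), t / (s + t), div_nonneg hs hc.le, div_nonneg ht hc.le,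
        by field_simp, rfl⟩
    have h0mem : (0 : E) ∈ tri l := subset_convexHull ℝ _ (Set.mem_insert _ _)
    have := convex_convexHull ℝ ({0, dir (lo l), dir (hi l)} : Set E)
      h0mem hzmem (by linarith : (0:ℝ) ≤ 1 - (s + t)) hc.le (by ring)
    have heq : (1 - (s + t)) • (0:E) + (s + t) • z = s • dir (lo l) + t • dir (hi l) := by
      rw [hz, smul_zero, zero_add, smul_add, smul_smul, smul_smul]
      rw [mul_div_cancel₀ _ h, mul_div_cancel₀ _ h]
    rw [← heq]
    exact this

lemma inner_combo (c x y : E) (a b : ℝ) :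
    ⟪a • x + b • y, c⟫ = a * ⟪x, c⟫ + b * ⟪y, c⟫ := by
  rw [inner_add_left, real_inner_smul_left, real_inner_smul_left]

lemma tri_eq (l : Fin 6) :
    tri l = {x : E | 0 ≤ ⟪x, nu l⟫ ∧ 0 ≤ ⟪x, nv l⟫ ∧ ⟪x, bvec l⟫ ≤ Real.sqrt 3 / 2} := by
  apply Set.Subset.antisymm
  · apply convexHull_min
    · rintro x (rfl | rfl | rfl)
      · refine ⟨by simp, by simp, by simp; positivity⟩
      · exact ⟨by rw [inner_u_nu], by rw [inner_u_nv]; positivity, by rw [inner_u_b]⟩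
      · exact ⟨by rw [inner_v_nu]; positivity, by rw [inner_v_nv], by rw [inner_v_b]⟩
    · intro x hx y hy a b ha hb hab
      refine ⟨?_, ?_, ?_⟩ <;> rw [inner_combo]
      · exact add_nonneg (mul_nonneg ha hx.1) (mul_nonneg hb hy.1)
      · exact add_nonneg (mul_nonneg ha hx.2.1) (mul_nonneg hb hy.2.1)
      · calc a * ⟪x, bvec l⟫ + b * ⟪y, bvec l⟫
            ≤ a * (Real.sqrt 3 / 2) + b * (Real.sqrt 3 / 2) :=
              add_le_add (mul_le_mul_of_nonneg_left hx.2.2 ha)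
                (mul_le_mul_of_nonneg_left hy.2.2 hb)
          _ = Real.sqrt 3 / 2 := by rw [← add_mul, hab, one_mul]
  · rintro x ⟨h1, h2, h3⟩
    have hd := decomp l x
    have hs0 : 0 ≤ (2 / Real.sqrt 3) * ⟪x, nv l⟫ := mul_nonneg (by positivity) h2
    have ht0 : 0 ≤ (2 / Real.sqrt 3) * ⟪x, nu l⟫ := mul_nonneg (by positivity) h1
    have hst : (2 / Real.sqrt 3) * ⟪x, nv l⟫ + (2 / Real.sqrt 3) * ⟪x, nu l⟫ ≤ 1 := by
      have hb := inner_b l x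
      have hne := sqrt3_pos.ne'
      have step : (2 / Real.sqrt 3) * (⟪x, nv l⟫ + ⟪x, nu l⟫)
          ≤ (2 / Real.sqrt 3) * (Real.sqrt 3 / 2) :=
        mul_le_mul_of_nonneg_left (by linarith) (by positivity)
      have : (2 / Real.sqrt 3) * (Real.sqrt 3 / 2) = 1 := by field_simp
      linarith [step, this ▸ step]
    rw [hd]
    exact smul_mem_tri l hs0 ht0 hst

lemma lTri_eq (l : Fin 6) (p : E) (lam : ℝ) (hlam : 0 < lam) :
    lTri l p lam = {x : E | 0 ≤ ⟪x - p, nu l⟫ ∧ 0 ≤ ⟪x - p, nv l⟫ ∧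
      ⟪x - p, bvec l⟫ ≤ lam * (Real.sqrt 3 / 2)} := by
  ext x
  constructor
  · rintro ⟨y, hy, rfl⟩
    rw [tri_eq] at hy
    obtain ⟨h1, h2, h3⟩ := hy
    have hsub : p + lam • y - p = lam • y := by abel
    refine ⟨?_, ?_, ?_⟩ <;> rw [hsub, real_inner_smul_left]
    · exact mul_nonneg hlam.le h1
    · exact mul_nonneg hlam.le h2
    · exact mul_le_mul_of_nonneg_left h3 hlam.le
  · rintro ⟨h1, h2, h3⟩
    refine ⟨lam⁻¹ • (x - p), ?_, ?_⟩
    · rw [tri_eq]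
      refine ⟨?_, ?_, ?_⟩ <;> rw [real_inner_smul_left]
      · exact mul_nonneg (by positivity) h1
      · exact mul_nonneg (by positivity) h2
      · rw [inv_mul_le_iff₀ hlam]
        linarith [h3]
    · simp [smul_smul, mul_inv_cancel₀ hlam.ne']


/-- if `p_j ∈ V_l(p_i)` has the minimum `b_l`-coordinate, then
`T = {p_i} ∪ {x ∈ closure (W_l(p_i)) : ⟨x - p_i, b_l⟩ ≤ ⟨p_j - p_i, b_l⟩}` is the
`l`-tri `p_i + λ∆_l` with `λ = (2/√3)⟨p_j - p_i, b_l⟩ > 0`, it is empty with respect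
to `P`, has `p_i` as one of its vertices, and has `p_j` on the side opposite `p_i`. -/
theorem min_bisector_coordinate_gives_empty_lTri
    (P : Finset E) (pi pj : E) (hpi : pi ∈ P) (l : Fin 6)
    (hj : pj ∈ Vl P l pi)
    (hmin : ∀ r ∈ Vl P l pi, ⟪pj - pi, bvec l⟫ ≤ ⟪r - pi, bvec l⟫) :
    0 < (2 / Real.sqrt 3) * ⟪pj - pi, bvec l⟫ ∧
    ({pi} ∪ {x ∈ closure (wedgeAt l pi) | ⟪x - pi, bvec l⟫ ≤ ⟪pj - pi, bvec l⟫}) =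
      lTri l pi ((2 / Real.sqrt 3) * ⟪pj - pi, bvec l⟫) ∧
    (∀ r ∈ P, r ∉ interior (lTri l pi ((2 / Real.sqrt 3) * ⟪pj - pi, bvec l⟫))) ∧
    pi ∈ (fun x => pi + ((2 / Real.sqrt 3) * ⟪pj - pi, bvec l⟫) • x) '' triVerts l ∧
    pj ∈ (fun x => pi + ((2 / Real.sqrt 3) * ⟪pj - pi, bvec l⟫) • x) ''
      segment ℝ (dir (lo l)) (dir (hi l)) := by
  obtain ⟨hjP, hjW⟩ := hj
  have hw := (mem_wedge_iff l (pj - pi)).mp hjW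
  set h := ⟪pj - pi, bvec l⟫ with hh
  have hpos : 0 < h := by rw [hh, inner_b]; linarith [hw.1, hw.2]
  set lam := (2 / Real.sqrt 3) * h with hlamdef
  have hs3 := sqrt3_pos
  have hlam0 : 0 < lam := mul_pos (by positivity) hpos
  have hlam_val : lam * (Real.sqrt 3 / 2) = h := by
    rw [hlamdef]; field_simp
  have hTri := lTri_eq l pi lam hlam0
  have hclW : closure (wedgeAt l pi)
      = {x : E | 0 ≤ ⟪x - pi, nu l⟫ ∧ 0 ≤ ⟪x - pi, nv l⟫} := by
    have he : wedgeAt l pi = (Homeomorph.subRight pi) ⁻¹' wedge l := rfl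
    rw [he, ← Homeomorph.preimage_closure, closure_wedge]
    rfl
  have hnormb : ‖bvec l‖ = 1 := norm_dir _
  have hnnu : ‖nu l‖ = 1 := norm_dir _
  have hnnv : ‖nv l‖ = 1 := norm_dir _
  refine ⟨hlam0, ?_, ?_, ?_, ?_⟩
  · rw [hTri, hclW]
    ext x
    simp only [Set.mem_union, Set.mem_singleton_iff, Set.mem_setOf_eq, Set.mem_sep_iff]
    constructor
    · rintro (rfl | ⟨⟨h1, h2⟩, h3⟩)
      · refine ⟨by simp, by simp, by simp [hlam_val, hpos.le]⟩
      · exact ⟨h1, h2, by rw [hlam_val]; exact h3⟩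
    · rintro ⟨h1, h2, h3⟩
      exact Or.inr ⟨⟨h1, h2⟩, by rw [hlam_val] at h3; exact h3⟩
  · intro r hr hint
    rw [mem_interior_iff_mem_nhds, Metric.mem_nhds_iff] at hint
    obtain ⟨ε, hε, hball⟩ := hint
    set δ := ε / 2 with hδ
    have hδ0 : 0 < δ := by positivity
    have hmem : ∀ w : E, ‖w‖ = 1 → r + δ • w ∈ lTri l pi lam := by
      intro w hwn
      apply hball
      rw [Metric.mem_ball, dist_eq_norm]
      have : r + δ • w - r = δ • w := by abel
      rw [this, norm_smul, hwn, mul_one, Real.norm_eq_abs, abs_of_pos hδ0, hδ]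
      linarith
    have key : ∀ w : E, ‖w‖ = 1 →
        0 ≤ ⟪r - pi, nu l⟫ + δ * ⟪w, nu l⟫ ∧
        0 ≤ ⟪r - pi, nv l⟫ + δ * ⟪w, nv l⟫ ∧
        ⟪r - pi, bvec l⟫ + δ * ⟪w, bvec l⟫ ≤ lam * (Real.sqrt 3 / 2) := by
      intro w hwn
      have := hTri ▸ hmem w hwn
      rw [Set.mem_setOf_eq] at this
      have hsub : r + δ • w - pi = (r - pi) + δ • w := by abel
      rw [hsub, inner_add_left, inner_add_left, inner_add_left,
        real_inner_smul_left, real_inner_smul_left, real_inner_smul_left] at this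
      exact this
    have hnu_pos : 0 < ⟪r - pi, nu l⟫ := by
      have := (key (-(nu l)) (by rw [norm_neg]; exact norm_dir _)).1
      rw [inner_neg_left, real_inner_self_eq_norm_mul_norm,
        hnnu] at this
      nlinarith
    have hnv_pos : 0 < ⟪r - pi, nv l⟫ := by
      have := (key (-(nv l)) (by rw [norm_neg]; exact norm_dir _)).2.1
      rw [inner_neg_left, real_inner_self_eq_norm_mul_norm,
        hnnv] at this
      nlinarith
    have hb_lt : ⟪r - pi, bvec l⟫ < h := by
      have := (key (bvec l) hnormb).2.2
      rw [real_inner_self_eq_norm_mul_norm, hnormb, hlam_val] at this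
      nlinarith
    have hrw : r - pi ∈ wedge l := (mem_wedge_iff l _).mpr ⟨hnu_pos.le, hnv_pos⟩
    have := hmin r ⟨hr, hrw⟩
    linarith
  · exact ⟨0, Or.inl rfl, by simp⟩
  · have hd := decomp l (pj - pi)
    set S := (2 / Real.sqrt 3) * ⟪pj - pi, nv l⟫ with hS
    set T := (2 / Real.sqrt 3) * ⟪pj - pi, nu l⟫ with hT
    have hS0 : 0 ≤ S := mul_nonneg (by positivity) hw.2.le
    have hT0 : 0 ≤ T := mul_nonneg (by positivity) hw.1
    have hST : S + T = lam := by
      rw [hS, hT, hlamdef, hh, inner_b]; ring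
    refine ⟨(S / lam) • dir (lo l) + (T / lam) • dir (hi l),
      ⟨S / lam, T / lam, div_nonneg hS0 hlam0.le, div_nonneg hT0 hlam0.le, ?_, rfl⟩, ?_⟩
    · rw [← add_div, hST, div_self hlam0.ne']
    · simp only [smul_add, smul_smul]
      rw [mul_div_cancel₀ _ hlam0.ne', mul_div_cancel₀ _ hlam0.ne', ← hd]
      abel
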